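/- If Σ_j p_τ(j)(ℓ_i − ℓ_j) ≥ Δ⁺ for some Δ⁺ ≥ 0 (the 'sufficiently accurate' condition for index i), then ∂p_τ(i)/∂τ ≤ −p_τ(i)·Δ⁺/τ² ≤ 0. -/

import Mathlib

open Real Finset

lemma softmax_hasDeriv (V : ℕ) (ℓ : Fin V → ℝ) (τ : ℝ) (hτ : 0 < τ) (i : Fin V)
    (hS : 0 < ∑ j, Real.exp (ℓ j / τ)) :
    HasDerivAt (fun t : ℝ => Real.exp (ℓ i / t) / ∑ j, Real.exp (ℓ j / t))
      ((Real.exp (ℓ i / τ) * (ℓ i * -(τ ^ 2)⁻¹) * (∑ j, Real.exp (ℓ j / τ)) -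
        Real.exp (ℓ i / τ) * ∑ j, Real.exp (ℓ j / τ) * (ℓ j * -(τ ^ 2)⁻¹)) /
        (∑ j, Real.exp (ℓ j / τ)) ^ 2) τ := by
  have hterm : ∀ j : Fin V, HasDerivAt (fun t : ℝ => Real.exp (ℓ j / t))
      (Real.exp (ℓ j / τ) * (ℓ j * -(τ ^ 2)⁻¹)) τ := by
    intro j
    have h1 : HasDerivAt (fun t : ℝ => ℓ j / t) (ℓ j * -(τ ^ 2)⁻¹) τ := by
      simpa [div_eq_mul_inv] using (hasDerivAt_inv hτ.ne').const_mul (ℓ j)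
    exact h1.exp
  exact (hterm i).div (HasDerivAt.fun_sum fun j _ => hterm j) hS.ne'

/-- under the 'sufficiently accurate' condition
`∑ j, p_τ(j)(ℓ_i − ℓ_j) ≥ Δ⁺` with `Δ⁺ ≥ 0`, the derivative of the softmax probability
of token `i` with respect to the temperature satisfies
`∂p_τ(i)/∂τ ≤ −p_τ(i)·Δ⁺/τ² ≤ 0`. -/
theorem softmax_deriv_sufficiently_accurate (V : ℕ) (hV : 0 < V) (ℓ : Fin V → ℝ)
    (τ Δ : ℝ) (hτ : 0 < τ) (hΔ : 0 ≤ Δ) (i : Fin V)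
    (hacc : Δ ≤ ∑ j, (Real.exp (ℓ j / τ) / ∑ j', Real.exp (ℓ j' / τ)) * (ℓ i - ℓ j)) :
    deriv (fun t : ℝ => Real.exp (ℓ i / t) / ∑ j, Real.exp (ℓ j / t)) τ ≤
      -((Real.exp (ℓ i / τ) / ∑ j, Real.exp (ℓ j / τ)) * Δ) / τ ^ 2 ∧
    -((Real.exp (ℓ i / τ) / ∑ j, Real.exp (ℓ j / τ)) * Δ) / τ ^ 2 ≤ 0 := by
  set S : ℝ := ∑ j, Real.exp (ℓ j / τ) with hSdef
  have hS : 0 < S := Finset.sum_pos (fun j _ => Real.exp_pos _) ⟨⟨0, hV⟩, mem_univ _⟩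
  have hE : 0 < Real.exp (ℓ i / τ) := Real.exp_pos _
  have hτ2 : 0 < τ ^ 2 := by positivity
  -- hacc rewritten
  have hacc' : Δ * S ≤ ℓ i * S - ∑ j, Real.exp (ℓ j / τ) * ℓ j := by
    have h1 : ∑ j, (Real.exp (ℓ j / τ) / S) * (ℓ i - ℓ j)
        = (∑ j, Real.exp (ℓ j / τ) * (ℓ i - ℓ j)) / S := by
      rw [Finset.sum_div]
      exact Finset.sum_congr rfl fun j _ => by ring
    rw [h1, le_div_iff₀ hS] at hacc
    calc Δ * S ≤ ∑ j, Real.exp (ℓ j / τ) * (ℓ i - ℓ j) := hacc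
      _ = ℓ i * S - ∑ j, Real.exp (ℓ j / τ) * ℓ j := by
          rw [hSdef, Finset.mul_sum, ← Finset.sum_sub_distrib]
          exact Finset.sum_congr rfl fun j _ => by ring
  have hderiv := (softmax_hasDeriv V ℓ τ hτ i hS).deriv
  constructor
  · rw [hderiv]
    have key : (Real.exp (ℓ i / τ) * (ℓ i * -(τ ^ 2)⁻¹) * S -
        Real.exp (ℓ i / τ) * ∑ j, Real.exp (ℓ j / τ) * (ℓ j * -(τ ^ 2)⁻¹)) / S ^ 2
        = -(Real.exp (ℓ i / τ) * (ℓ i * S - ∑ j, Real.exp (ℓ j / τ) * ℓ j)) / (τ ^ 2 * S ^ 2) := by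
      have : ∑ j, Real.exp (ℓ j / τ) * (ℓ j * -(τ ^ 2)⁻¹)
          = -(τ ^ 2)⁻¹ * ∑ j, Real.exp (ℓ j / τ) * ℓ j := by
        rw [Finset.mul_sum]; exact Finset.sum_congr rfl fun j _ => by ring
      rw [this]
      field_simp
      ring
    rw [key]
    have htarget : -((Real.exp (ℓ i / τ) / S) * Δ) / τ ^ 2
        = -(Real.exp (ℓ i / τ) * (Δ * S)) / (τ ^ 2 * S ^ 2) := by
      field_simp
    rw [htarget]
    apply div_le_div_of_nonneg_right _ (by positivity) |>.trans_eq rfl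
    · simp only [neg_le_neg_iff]
      exact mul_le_mul_of_nonneg_left hacc' hE.le
  · apply div_nonpos_of_nonpos_of_nonneg
    · simp only [neg_nonpos]
      positivity
    · positivity
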